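/- Let d : ℝ^q → ℝ be concave differentiable, D ⊆ ℝ^q closed convex with sup_D d = d⋆ attained at u⋆ ∈ D, and let u ∈ D, u⁺ = P_D[u + α∇d(u)] for some α > 0. Then d⋆ − d(u) ≤ (‖∇d(u)‖ + ‖u − u⋆‖/α)·‖u⁺ − u‖. -/

import Mathlib

open scoped RealInnerProductSpace

lemma first_order_concave {q : ℕ} (d : EuclideanSpace ℝ (Fin q) → ℝ)
    (hconc : ConcaveOn ℝ Set.univ d) {x g : EuclideanSpace ℝ (Fin q)}
    (hx : HasGradientAt d g x) (y : EuclideanSpace ℝ (Fin q)) :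
    d y - d x ≤ ⟪g, y - x⟫ := by
  set φ : ℝ → ℝ := fun t => d (x + t • (y - x)) with hφdef
  have hline : HasDerivAt (fun t : ℝ => x + t • (y - x)) (y - x) 0 := by
    simpa using ((hasDerivAt_id (0:ℝ)).smul_const (y - x)).const_add x
  have hF : HasFDerivAt d (InnerProductSpace.toDual ℝ _ g : _ →L[ℝ] ℝ) x :=
    hasGradientAt_iff_hasFDerivAt.mp hx
  have hF' : HasFDerivAt d (InnerProductSpace.toDual ℝ _ g : _ →L[ℝ] ℝ) (x + (0:ℝ) • (y - x)) := by
    simpa using hF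
  have hφ : HasDerivAt φ ⟪g, y - x⟫ 0 := by
    have hc := hF'.comp_hasDerivAt 0 hline
    simp at hc
    exact hc
  have hslope : ∀ t ∈ Set.Ioc (0:ℝ) 1, d y - d x ≤ slope φ 0 t := by
    intro t ht
    have hcc := hconc.2 (Set.mem_univ x) (Set.mem_univ y) (by linarith [ht.2] : (0:ℝ) ≤ 1 - t)
      ht.1.le (by ring)
    have hpt : (1 - t) • x + t • y = x + t • (y - x) := by module
    rw [hpt] at hcc
    have : t * (d y - d x) ≤ φ t - φ 0 := by
      simp only [hφdef, zero_smul, add_zero, smul_eq_mul] at hcc ⊢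
      nlinarith
    rw [slope_def_field, sub_zero, le_div_iff₀ ht.1]
    nlinarith
  have htend : Filter.Tendsto (slope φ 0) (nhdsWithin 0 (Set.Ioi 0)) (nhds ⟪g, y - x⟫) :=
    (hasDerivAt_iff_tendsto_slope.mp hφ).mono_left
      (nhdsWithin_mono 0 (fun t ht => ne_of_gt ht))
  refine ge_of_tendsto htend ?_
  filter_upwards [Ioc_mem_nhdsGT_of_mem (Set.mem_Ico.mpr ⟨le_refl 0, zero_lt_one⟩)] with t ht
  exact hslope t ht

/-- Dual suboptimality bound via the projected gradient step: for concave differentiable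
`d`, closed convex `D` with maximizer `u⋆ ∈ D`, `u ∈ D`, `α > 0`, and
`u⁺ = P_D[u + α∇d(u)]`:  `d⋆ − d(u) ≤ (‖∇d(u)‖ + ‖u − u⋆‖/α)·‖u⁺ − u‖`. -/
theorem dual_suboptimality_step_bound {q : ℕ}
    (d : EuclideanSpace ℝ (Fin q) → ℝ)
    (d' : EuclideanSpace ℝ (Fin q) → EuclideanSpace ℝ (Fin q))
    (hconc : ConcaveOn ℝ Set.univ d)
    (hgrad : ∀ w, HasGradientAt d (d' w) w)
    (D : Set (EuclideanSpace ℝ (Fin q))) (hDcl : IsClosed D) (hDcv : Convex ℝ D)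
    -- `P` is the Euclidean projection onto `D`
    (P : EuclideanSpace ℝ (Fin q) → EuclideanSpace ℝ (Fin q))
    (hP : ∀ y, P y ∈ D ∧ ∀ v ∈ D, ⟪y - P y, v - P y⟫ ≤ 0)
    (ustar : EuclideanSpace ℝ (Fin q)) (hustar : ustar ∈ D)
    (hmax : ∀ v ∈ D, d v ≤ d ustar)
    (u : EuclideanSpace ℝ (Fin q)) (hu : u ∈ D)
    (α : ℝ) (hα : 0 < α)
    (uplus : EuclideanSpace ℝ (Fin q)) (huplus : uplus = P (u + α • d' u)) :
    d ustar - d u ≤ (‖d' u‖ + ‖u - ustar‖ / α) * ‖uplus - u‖ := by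
  set g := d' u with hg
  set p := uplus with hp
  have h1 : d ustar - d u ≤ ⟪g, ustar - u⟫ := first_order_concave d hconc (hgrad u) ustar
  have hproj : ⟪u + α • g - p, ustar - p⟫ ≤ 0 := by
    rw [huplus]; exact (hP (u + α • g)).2 ustar hustar
  -- rewrite projection inequality
  have h2 : α * ⟪g, ustar - p⟫ ≤ ⟪p - u, ustar - p⟫ := by
    have : ⟪u + α • g - p, ustar - p⟫ = α * ⟪g, ustar - p⟫ - ⟪p - u, ustar - p⟫ := by
      rw [show u + α • g - p = α • g - (p - u) by abel, inner_sub_left, real_inner_smul_left]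
    linarith [hproj, this ▸ hproj]
  have h3 : ⟪p - u, ustar - p⟫ ≤ ‖p - u‖ * ‖ustar - u‖ := by
    have he : ⟪p - u, ustar - p⟫ = ⟪p - u, ustar - u⟫ - ⟪p - u, p - u⟫ := by
      rw [← inner_sub_right]; congr 1; abel
    have h4 : ⟪p - u, ustar - u⟫ ≤ ‖p - u‖ * ‖ustar - u‖ := real_inner_le_norm _ _
    have h5 : (0:ℝ) ≤ ⟪p - u, p - u⟫ := real_inner_self_nonneg
    linarith
  have h6 : ⟪g, p - u⟫ ≤ ‖g‖ * ‖p - u‖ := real_inner_le_norm _ _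
  have hsplit : ⟪g, ustar - u⟫ = ⟪g, p - u⟫ + ⟪g, ustar - p⟫ := by
    rw [← inner_add_right]; congr 1; abel
  have h7 : ⟪g, ustar - p⟫ ≤ ‖p - u‖ * ‖ustar - u‖ / α := by
    rw [le_div_iff₀ hα]
    calc ⟪g, ustar - p⟫ * α = α * ⟪g, ustar - p⟫ := by ring
      _ ≤ ⟪p - u, ustar - p⟫ := h2
      _ ≤ ‖p - u‖ * ‖ustar - u‖ := h3
  have hnorm : ‖u - ustar‖ = ‖ustar - u‖ := norm_sub_rev _ _
  have : (‖g‖ + ‖u - ustar‖ / α) * ‖p - u‖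
      = ‖g‖ * ‖p - u‖ + ‖p - u‖ * ‖ustar - u‖ / α := by
    rw [hnorm]; field_simp
  linarith [h1, hsplit ▸ h1]
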